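/- Let 0 < q < 1, 0 < p < 1, N ∈ ℕ. The q-Kravchuk moments u_k^q = ∑_{s=0}^{N} [s]_q^(k) ρ(s)(x(s+1/2)-x(s-1/2)) with ρ(s) = q^{s(N-1)/2 - binom(N,2)/2} [N]_q!/([s]_q! [N-s]_q!) p^s (1-p)^{N-s} satisfy u_k^q = u_0^q · (q^{-N};q)_k / [(1-q)^k ((pq/(p-1));q)_k] · (p q^{N+1}/(p-1))^k, where u_0^q = (1-p)^N q^{-(binom(N,2)+1)/2} ((pq/(p-1));q)_N. -/

import Mathlib

/-- The lattice `x(s) = (q^s - 1)/(q - 1)`. -/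
noncomputable def qlat (q s : ℝ) : ℝ := (q ^ s - 1) / (q - 1)

/-- The q-falling factorial `[s]_q^(k) = ∏_{j=0}^{k-1} x(s - j)`. -/
noncomputable def qfall (q s : ℝ) (k : ℕ) : ℝ := ∏ j ∈ Finset.range k, qlat q (s - j)

/-- The q-Pochhammer symbol `(a;q)_k`. -/
noncomputable def qPoch (a q : ℝ) (k : ℕ) : ℝ := ∏ j ∈ Finset.range k, (1 - a * q ^ j)

/-- The symmetric q-number `[k]_q`. -/
noncomputable def qnum (q k : ℝ) : ℝ :=
  (q ^ (k / 2) - q ^ (-(k / 2))) / (q ^ ((1 : ℝ) / 2) - q ^ (-(1 : ℝ) / 2))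

/-- The symmetric q-factorial `[n]_q!`. -/
noncomputable def qfact (q : ℝ) (n : ℕ) : ℝ := ∏ k ∈ Finset.range n, qnum q (k + 1)

namespace QK

noncomputable def X (q : ℝ) (m : ℕ) : ℝ := (q ^ m - 1) / (q - 1)
noncomputable def F (q : ℝ) (n : ℕ) : ℝ := ∏ i ∈ Finset.range n, X q (i + 1)

variable {q : ℝ}

lemma qm1 (hq1 : q < 1) : q - 1 ≠ 0 := by intro h; nlinarith

lemma X_pos (hq : 0 < q) (hq1 : q < 1) {m : ℕ} (hm : 1 ≤ m) : 0 < X q m := by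
  have h1 : q ^ m < 1 := pow_lt_one₀ hq.le hq1 (by omega)
  exact div_pos_of_neg_of_neg (by linarith) (by linarith)

lemma F_pos (hq : 0 < q) (hq1 : q < 1) (n : ℕ) : 0 < F q n :=
  Finset.prod_pos fun i _ => X_pos hq hq1 (by omega)

lemma F_succ (n : ℕ) : F q (n + 1) = F q n * X q (n + 1) := Finset.prod_range_succ _ _

lemma X_add (hq1 : q < 1) (m r : ℕ) : X q (m + r) = X q m + q ^ m * X q r := by
  unfold X
  rw [pow_add]
  field_simp
  ring

lemma prod_X (hq : 0 < q) (hq1 : q < 1) {k s : ℕ} (h : k ≤ s) :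
    ∏ j ∈ Finset.range k, X q (s - j) = F q s / F q (s - k) := by
  induction k with
  | zero => simp [Nat.sub_zero, div_self (F_pos hq hq1 s).ne']
  | succ k ih =>
    rw [Finset.prod_range_succ, ih (by omega)]
    have h1 : s - k = (s - (k + 1)) + 1 := by omega
    rw [h1, F_succ]
    have h2 : s - (k + 1) + 1 = s - k := by omega
    rw [h2]
    have hX : X q (s - k) ≠ 0 := (X_pos hq hq1 (by omega)).ne'
    have hF : F q (s - (k + 1)) ≠ 0 := (F_pos hq hq1 _).ne'
    field_simp

lemma tri_succ (n : ℕ) : (n + 1) * ((n + 1) - 1) / 2 = n * (n - 1) / 2 + n := by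
  have h1 : (n + 1) * ((n + 1) - 1) = n * (n - 1) + n * 2 := by
    cases n with
    | zero => simp
    | succ m => simp only [Nat.succ_sub_one]; ring
  rw [h1, Nat.add_mul_div_right _ _ (by norm_num : 0 < 2)]

lemma qbt (hq : 0 < q) (hq1 : q < 1) (a b : ℝ) (M : ℕ) :
    ∏ j ∈ Finset.range M, (a + b * q ^ j) =
      ∑ t ∈ Finset.range (M + 1),
        F q M / (F q t * F q (M - t)) * q ^ (t * (t - 1) / 2) * b ^ t * a ^ (M - t) := by
  induction M with
  | zero => simp [F]
  | succ M ih =>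
    rw [Finset.prod_range_succ, ih]
    rw [Finset.sum_mul]
    have expand : ∀ t ∈ Finset.range (M + 1),
        F q M / (F q t * F q (M - t)) * q ^ (t * (t - 1) / 2) * b ^ t * a ^ (M - t) *
          (a + b * q ^ M) =
        F q M / (F q t * F q (M - t)) * q ^ (t * (t - 1) / 2) * b ^ t * a ^ (M + 1 - t)
          + F q M / (F q t * F q (M - t)) * (q ^ (t * (t - 1) / 2) * q ^ M) * b ^ (t + 1)
            * a ^ (M - t) := by
      intro t ht
      have h1 : M + 1 - t = (M - t) + 1 := by
        have := Finset.mem_range.mp ht; omega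
      rw [h1, pow_succ, pow_succ]
      ring
    rw [Finset.sum_congr rfl expand, Finset.sum_add_distrib]
    -- strip first of RHS
    rw [Finset.sum_range_succ' (fun t => F q (M+1) / (F q t * F q (M+1 - t)) *
          q ^ (t * (t - 1) / 2) * b ^ t * a ^ (M + 1 - t)) (M+1)]
    rw [Finset.sum_range_succ (fun i => F q (M+1) / (F q (i+1) * F q (M+1 - (i+1))) *
          q ^ ((i+1) * ((i+1) - 1) / 2) * b ^ (i+1) * a ^ (M + 1 - (i+1))) M]
    -- strip first of A, last of B
    rw [Finset.sum_range_succ' (fun t => F q M / (F q t * F q (M - t)) *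
          q ^ (t * (t - 1) / 2) * b ^ t * a ^ (M + 1 - t)) M]
    rw [Finset.sum_range_succ (fun t => F q M / (F q t * F q (M - t)) *
          (q ^ (t * (t - 1) / 2) * q ^ M) * b ^ (t + 1) * a ^ (M - t)) M]
    have hF0 : F q 0 = 1 := by simp [F]
    have first : F q M / (F q 0 * F q (M - 0)) * q ^ (0 * (0 - 1) / 2) * b ^ 0 * a ^ (M + 1 - 0)
        = F q (M+1) / (F q 0 * F q (M + 1 - 0)) * q ^ (0 * (0-1) / 2) * b ^ 0 * a ^ (M + 1 - 0) := by
      simp [hF0, div_self (F_pos hq hq1 M).ne', div_self (F_pos hq hq1 (M+1)).ne']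
    have last : F q M / (F q M * F q (M - M)) * (q ^ (M * (M - 1) / 2) * q ^ M) * b ^ (M + 1)
          * a ^ (M - M)
        = F q (M+1) / (F q (M+1) * F q (M + 1 - (M+1))) * q ^ ((M+1) * ((M+1) - 1) / 2)
          * b ^ (M+1) * a ^ (M + 1 - (M+1)) := by
      have he : (M + 1) * ((M + 1) - 1) / 2 = M * (M - 1) / 2 + M := tri_succ M
      simp only [Nat.sub_self, hF0, mul_one, pow_zero, he, pow_add,
        div_self (F_pos hq hq1 M).ne', div_self (F_pos hq hq1 (M+1)).ne']
    have middle : ∀ i ∈ Finset.range M,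
        F q M / (F q (i+1) * F q (M - (i+1))) * q ^ ((i+1) * ((i+1) - 1) / 2) * b ^ (i+1)
            * a ^ (M + 1 - (i+1))
          + F q M / (F q i * F q (M - i)) * (q ^ (i * (i - 1) / 2) * q ^ M) * b ^ (i+1)
            * a ^ (M - i)
        = F q (M+1) / (F q (i+1) * F q (M + 1 - (i+1))) * q ^ ((i+1) * ((i+1) - 1) / 2)
            * b ^ (i+1) * a ^ (M + 1 - (i+1)) := by
      intro i hi
      have hiM : i < M := Finset.mem_range.mp hi
      have h1 : M + 1 - (i + 1) = M - i := by omega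
      have h2 : M - (i + 1) = M - i - 1 := by omega
      rw [h1, h2]
      have hqpow : q ^ (i * (i - 1) / 2) * q ^ M
          = q ^ ((i+1) * ((i+1) - 1) / 2) * q ^ (M - i) := by
        rw [← pow_add, ← pow_add]
        congr 1
        rw [tri_succ i]
        omega
      rw [hqpow]
      have hFi : F q i ≠ 0 := (F_pos hq hq1 i).ne'
      have hFi1 : F q (i+1) ≠ 0 := (F_pos hq hq1 (i+1)).ne'
      have hFMi : F q (M - i) ≠ 0 := (F_pos hq hq1 _).ne'
      have hFMi1 : F q (M - i - 1) ≠ 0 := (F_pos hq hq1 _).ne'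
      have hFM1 : F q (M + 1) = F q M * X q (M + 1) := F_succ M
      have hFMi2 : F q (M - i) = F q (M - i - 1) * X q (M - i) := by
        have h3 : M - i = (M - i - 1) + 1 := by omega
        rw [h3, F_succ]; congr 1
      have hFid : F q (i + 1) = F q i * X q (i + 1) := F_succ i
      have pascal : X q (M + 1) = X q (M - i) + q ^ (M - i) * X q (i + 1) := by
        have h4 : M + 1 = (M - i) + (i + 1) := by omega
        rw [h4]; exact X_add hq1 _ _
      have hXMi : X q (M - i) ≠ 0 := (X_pos hq hq1 (by omega)).ne'
      have hXi1 : X q (i + 1) ≠ 0 := (X_pos hq hq1 (by omega)).ne'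
      rw [hFM1, hFMi2, hFid, pascal]
      field_simp
    have key : (∑ i ∈ Finset.range M, F q M / (F q (i+1) * F q (M - (i+1))) *
            q ^ ((i+1) * ((i+1) - 1) / 2) * b ^ (i+1) * a ^ (M + 1 - (i+1)))
          + ∑ i ∈ Finset.range M, F q M / (F q i * F q (M - i)) *
            (q ^ (i * (i - 1) / 2) * q ^ M) * b ^ (i+1) * a ^ (M - i)
        = ∑ i ∈ Finset.range M, F q (M+1) / (F q (i+1) * F q (M + 1 - (i+1))) *
            q ^ ((i+1) * ((i+1) - 1) / 2) * b ^ (i+1) * a ^ (M + 1 - (i+1)) := by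
      rw [← Finset.sum_add_distrib]
      exact Finset.sum_congr rfl middle
    linear_combination key + first + last


lemma cast_tri (t : ℕ) : ((t * (t - 1) / 2 : ℕ) : ℝ) = (t : ℝ) * ((t : ℝ) - 1) / 2 := by
  cases t with
  | zero => simp
  | succ m =>
    have h2 : 2 ∣ (m + 1) * ((m + 1) - 1) := by
      simpa [Nat.succ_sub_one, mul_comm] using (Nat.even_mul_succ_self m).two_dvd
    rw [Nat.cast_div h2 (by norm_num : (2:ℝ) ≠ 0)]
    push_cast [Nat.succ_sub_one]
    ring

lemma qlat_nat (m : ℕ) : qlat q (m : ℝ) = X q m := by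
  unfold qlat X
  rw [Real.rpow_natCast]

lemma qlat_diff (hq : 0 < q) (hq1 : q < 1) (r : ℝ) :
    qlat q (r + 1 / 2) - qlat q (r - 1 / 2) = q ^ (r - 1 / 2) := by
  unfold qlat
  rw [div_sub_div_same]
  have h : q ^ (r + 1 / 2) = q ^ (r - 1 / 2) * q := by
    have h2 : q ^ (r + 1 / 2) = q ^ (r - 1 / 2) * q ^ (1:ℝ) := by
      rw [← Real.rpow_add hq, show r - 1 / 2 + 1 = r + 1 / 2 by ring]
    rwa [Real.rpow_one] at h2
  rw [h]
  field_simp [qm1 hq1]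
  ring

lemma qfall_eq (hq : 0 < q) (hq1 : q < 1) {s k : ℕ} (h : k ≤ s) :
    qfall q s k = F q s / F q (s - k) := by
  unfold qfall
  rw [← prod_X hq hq1 h]
  refine Finset.prod_congr rfl fun j hj => ?_
  have hj' : j < k := Finset.mem_range.mp hj
  have hc : (s : ℝ) - (j : ℝ) = ((s - j : ℕ) : ℝ) := by
    rw [Nat.cast_sub (by omega)]
  rw [hc, qlat_nat]

lemma qfall_zero {s k : ℕ} (h : s < k) : qfall q (s : ℝ) k = 0 := by
  apply Finset.prod_eq_zero (Finset.mem_range.mpr h)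
  simp [qlat]

lemma qnum_eq (hq : 0 < q) (hq1 : q < 1) (k : ℕ) :
    qnum q ((k : ℝ) + 1) = q ^ (-(k : ℝ) / 2) * X q (k + 1) := by
  unfold qnum X
  have hA : (0:ℝ) < q ^ ((k : ℝ) / 2) := Real.rpow_pos_of_pos hq _
  have hB : (0:ℝ) < q ^ ((1 : ℝ) / 2) := Real.rpow_pos_of_pos hq _
  have hB1 : q ^ ((1 : ℝ) / 2) < 1 := Real.rpow_lt_one hq.le hq1 (by norm_num)
  set A := q ^ ((k : ℝ) / 2) with hAdef
  set B := q ^ ((1 : ℝ) / 2) with hBdef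
  have hP : q ^ (((k:ℝ) + 1) / 2) = A * B := by
    rw [hAdef, hBdef, ← Real.rpow_add hq]
    congr 1
    ring
  have hM : q ^ (-(((k:ℝ) + 1) / 2)) = (A * B)⁻¹ := by
    rw [Real.rpow_neg hq.le, hP]
  have hBm : q ^ ((-1 : ℝ) / 2) = B⁻¹ := by
    rw [hBdef, ← Real.rpow_neg hq.le]
    congr 1
    ring
  have h4 : q ^ (-(k : ℝ) / 2) = A⁻¹ := by
    rw [hAdef, ← Real.rpow_neg hq.le]
    congr 1
    ring
  have h5 : q = B * B := by
    rw [hBdef, ← Real.rpow_add hq]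
    norm_num
  have h6 : q ^ (k + 1) = A * A * (B * B) := by
    rw [← Real.rpow_natCast q (k + 1)]
    push_cast
    rw [show ((k:ℝ) + 1) = ((k:ℝ)/2 + (k:ℝ)/2) + ((1:ℝ)/2 + (1:ℝ)/2) by ring,
      Real.rpow_add hq, Real.rpow_add hq, Real.rpow_add hq, ← hAdef, ← hBdef]
  rw [hP, hM, hBm, h4, h6, h5]
  have hBne : B ≠ 0 := hB.ne'
  have hAne : A ≠ 0 := hA.ne'
  have hB1ne : B * B - 1 ≠ 0 := by nlinarith
  have hBBne : B - B⁻¹ ≠ 0 := by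
    have hgt : B⁻¹ > 1 := (one_lt_inv₀ hB).mpr hB1
    intro hcon
    nlinarith
  field_simp

lemma qfact_eq (hq : 0 < q) (hq1 : q < 1) (n : ℕ) :
    qfact q n = q ^ (-(n.choose 2 : ℝ) / 2) * F q n := by
  unfold qfact
  have step : ∀ i ∈ Finset.range n, qnum q ((i : ℝ) + 1) = q ^ (-(i : ℝ) / 2) * X q (i + 1) :=
    fun i _ => qnum_eq hq hq1 i
  rw [Finset.prod_congr rfl step, Finset.prod_mul_distrib]
  have hsum : ∑ i ∈ Finset.range n, (-(i : ℝ) / 2) = -(n.choose 2 : ℝ) / 2 := by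
    rw [← Finset.sum_div, Finset.sum_neg_distrib]
    have : ∑ i ∈ Finset.range n, (i : ℝ) = (n.choose 2 : ℝ) := by
      rw [← Nat.cast_sum]
      congr 1
      rw [Finset.sum_range_id, Nat.choose_two_right]
    rw [this]
  rw [← Real.rpow_sum_of_pos hq, hsum]
  rfl


lemma qPoch_pos {p : ℝ} (hq : 0 < q) (hp : 0 < p) (hp1 : p < 1) (m : ℕ) :
    0 < qPoch (p * q / (p - 1)) q m := by
  apply Finset.prod_pos
  intro j _
  have hc : p * q / (p - 1) < 0 :=
    div_neg_of_pos_of_neg (by positivity) (by linarith)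
  have : (0:ℝ) < q ^ j := by positivity
  nlinarith

lemma qPoch_qN (hq : 0 < q) (hq1 : q < 1) {k N : ℕ} (h : k ≤ N) :
    qPoch (q ^ (-(N : ℝ))) q k =
      (q - 1) ^ k * q ^ ((k : ℝ) * ((k : ℝ) - 1) / 2 - (N : ℝ) * (k : ℝ)) *
        (F q N / F q (N - k)) := by
  unfold qPoch
  have step : ∀ j ∈ Finset.range k,
      1 - q ^ (-(N : ℝ)) * q ^ j = (q - 1) * (q ^ ((j : ℝ) - (N : ℝ)) * X q (N - j)) := by
    intro j hj
    have hjk : j < k := Finset.mem_range.mp hj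
    have e1 : q ^ (-(N : ℝ)) * q ^ j = q ^ ((j : ℝ) - (N : ℝ)) := by
      rw [← Real.rpow_natCast q j, ← Real.rpow_add hq]
      congr 1
      ring
    have e2 : q ^ ((j : ℝ) - (N : ℝ)) * (q ^ (N - j : ℕ)) = 1 := by
      rw [← Real.rpow_natCast q (N - j), ← Real.rpow_add hq, Nat.cast_sub (by omega)]
      norm_num
    have e3 : (q - 1) * X q (N - j) = q ^ (N - j : ℕ) - 1 := by
      unfold X
      rw [mul_comm, div_mul_cancel₀ _ (qm1 hq1)]
    rw [e1]
    calc 1 - q ^ ((j : ℝ) - (N : ℝ))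
        = q ^ ((j : ℝ) - (N : ℝ)) * (q ^ (N - j : ℕ) - 1) := by
          rw [mul_sub, e2]; ring
      _ = (q - 1) * (q ^ ((j : ℝ) - (N : ℝ)) * X q (N - j)) := by rw [← e3]; ring
  have hsum : (∑ j ∈ Finset.range k, ((j : ℝ) - (N : ℝ)))
      = (k : ℝ) * ((k : ℝ) - 1) / 2 - (N : ℝ) * (k : ℝ) := by
    rw [Finset.sum_sub_distrib, Finset.sum_const, Finset.card_range, ← Nat.cast_sum,
      Finset.sum_range_id, cast_tri]
    push_cast
    ring
  rw [Finset.prod_congr rfl step, Finset.prod_mul_distrib, Finset.prod_const,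
    Finset.card_range, Finset.prod_mul_distrib, prod_X hq hq1 h,
    ← Real.rpow_sum_of_pos hq, hsum]
  ring

end QK

open QK

set_option maxHeartbeats 1000000 in
/-- q-Kravchuk moments: with
`ρ(s) = q^{s(N-1)/2 - binom(N,2)/2} [N]_q!/([s]_q! [N-s]_q!) p^s (1-p)^{N-s}`,
the `k`-th q-moment equals
`u_0^q (q^{-N};q)_k/[(1-q)^k (pq/(p-1);q)_k] (pq^{N+1}/(p-1))^k`, with
`u_0^q = (1-p)^N q^{-(binom(N,2)+1)/2} (pq/(p-1);q)_N`. -/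
theorem qKravchuk_moments (q p : ℝ) (N : ℕ) (hq : 0 < q) (hq1 : q < 1)
    (hp : 0 < p) (hp1 : p < 1) (k : ℕ) :
    ∑ s ∈ Finset.range (N + 1),
        qfall q s k *
          (q ^ ((s : ℝ) * ((N : ℝ) - 1) / 2 - (N.choose 2 : ℝ) / 2) *
            qfact q N / (qfact q s * qfact q (N - s)) * p ^ s * (1 - p) ^ (N - s)) *
          (qlat q ((s : ℝ) + 1 / 2) - qlat q ((s : ℝ) - 1 / 2)) =
      ((1 - p) ^ N * q ^ (-((N.choose 2 : ℝ) + 1) / 2) * qPoch (p * q / (p - 1)) q N) *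
        qPoch (q ^ (-(N : ℝ))) q k / ((1 - q) ^ k * qPoch (p * q / (p - 1)) q k) *
          (p * q ^ (N + 1) / (p - 1)) ^ k := by
  by_cases hkN : N < k
  · have hP : qPoch (q ^ (-(N : ℝ))) q k = 0 := by
      apply Finset.prod_eq_zero (Finset.mem_range.mpr hkN)
      rw [← Real.rpow_natCast q N, ← Real.rpow_add hq]
      simp
    rw [hP]
    simp only [mul_zero, zero_div, zero_mul]
    refine Finset.sum_eq_zero fun s hs => ?_
    have hs' : s < k := by have := Finset.mem_range.mp hs; omega
    rw [qfall_zero hs', zero_mul, zero_mul]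
  · push_neg at hkN
    -- k ≤ N
    have hq1' : q - 1 ≠ 0 := qm1 hq1
    have hp1' : p - 1 ≠ 0 := by intro h; nlinarith
    have h1p : (1:ℝ) - p ≠ 0 := by intro h; nlinarith
    have h1q : (1:ℝ) - q ≠ 0 := by intro h; nlinarith
    have hPk : qPoch (p * q / (p - 1)) q k ≠ 0 := (qPoch_pos hq hp hp1 k).ne'
    have Fne : ∀ n, F q n ≠ 0 := fun n => (F_pos hq hq1 n).ne'
    have hrp : ∀ x : ℝ, q ^ x ≠ 0 := fun x => (Real.rpow_pos_of_pos hq x).ne'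
    -- Step 1 : restrict the sum
    rw [Finset.range_eq_Ico, ← Finset.sum_Ico_consecutive _ (Nat.zero_le k)
      (show k ≤ N + 1 by omega)]
    have hzero : (∑ s ∈ Finset.Ico 0 k,
        qfall q s k *
          (q ^ ((s : ℝ) * ((N : ℝ) - 1) / 2 - (N.choose 2 : ℝ) / 2) *
            qfact q N / (qfact q s * qfact q (N - s)) * p ^ s * (1 - p) ^ (N - s)) *
          (qlat q ((s : ℝ) + 1 / 2) - qlat q ((s : ℝ) - 1 / 2))) = 0 := by
      refine Finset.sum_eq_zero fun s hs => ?_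
      have hs' : s < k := (Finset.mem_Ico.mp hs).2
      rw [qfall_zero hs', zero_mul, zero_mul]
    rw [hzero, zero_add, Finset.sum_Ico_eq_sum_range,
      show N + 1 - k = (N - k) + 1 from by omega]
    -- Step 2 : termwise identification
    have claim : ∀ t ∈ Finset.range ((N - k) + 1),
        qfall q (↑(k + t)) k *
          (q ^ ((↑(k + t) : ℝ) * ((N : ℝ) - 1) / 2 - (N.choose 2 : ℝ) / 2) *
            qfact q N / (qfact q (k + t) * qfact q (N - (k + t))) * p ^ (k + t) *
              (1 - p) ^ (N - (k + t))) *
          (qlat q ((↑(k + t) : ℝ) + 1 / 2) - qlat q ((↑(k + t) : ℝ) - 1 / 2))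
        = (q ^ ((k : ℝ) * ((k : ℝ) + 1) / 2 - ((N.choose 2 : ℝ) + 1) / 2) *
            (F q N / F q (N - k)) * p ^ k) *
          (F q (N - k) / (F q t * F q ((N - k) - t)) * q ^ (t * (t - 1) / 2) *
            (p * q ^ (k + 1)) ^ t * (1 - p) ^ ((N - k) - t)) := by
      intro t ht
      have htM : t ≤ N - k := by have := Finset.mem_range.mp ht; omega
      have hsN : k + t ≤ N := by omega
      have e1 : qfall q (↑(k + t)) k = F q (k + t) / F q t := by
        rw [qfall_eq hq hq1 (by omega : k ≤ k + t), show k + t - k = t from by omega]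
      rw [e1, qfact_eq hq hq1 N, qfact_eq hq hq1 (k + t), qfact_eq hq hq1 (N - (k + t)),
        qlat_diff hq hq1, show N - (k + t) = N - k - t from by omega]
      have hc : ((N - k - t : ℕ) : ℝ) = (N : ℝ) - k - t := by
        rw [show N - k - t = N - (k + t) from by omega, Nat.cast_sub (by omega : k + t ≤ N)]
        push_cast
        ring
      have hpow' : q ^ ((↑(k + t) : ℝ) * ((N : ℝ) - 1) / 2 - (N.choose 2 : ℝ) / 2) *
            q ^ (-(N.choose 2 : ℝ) / 2) * q ^ ((↑(k + t) : ℝ) - 1 / 2) /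
            (q ^ (-(((k + t).choose 2 : ℕ) : ℝ) / 2) * q ^ (-(((N - k - t).choose 2 : ℕ) : ℝ) / 2))
          = q ^ (((k : ℝ) * ((k : ℝ) + 1) / 2 - ((N.choose 2 : ℝ) + 1) / 2) +
              (((t * (t - 1) / 2 : ℕ) : ℝ) + (((k + 1) * t : ℕ) : ℝ))) := by
        rw [← Real.rpow_add hq, ← Real.rpow_add hq, ← Real.rpow_add hq, ← Real.rpow_sub hq]
        congr 1
        rw [Nat.cast_choose_two, Nat.cast_choose_two, Nat.cast_choose_two, cast_tri, hc]
        push_cast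
        ring
      trans ((q ^ ((↑(k + t) : ℝ) * ((N : ℝ) - 1) / 2 - (N.choose 2 : ℝ) / 2) *
            q ^ (-(N.choose 2 : ℝ) / 2) * q ^ ((↑(k + t) : ℝ) - 1 / 2) /
            (q ^ (-(((k + t).choose 2 : ℕ) : ℝ) / 2) * q ^ (-(((N - k - t).choose 2 : ℕ) : ℝ) / 2))) *
          (F q (k + t) / F q t * (F q N / (F q (k + t) * F q (N - k - t))) * p ^ (k + t) *
            (1 - p) ^ (N - k - t)))
      · ring
      rw [hpow', Real.rpow_add hq, Real.rpow_add hq, Real.rpow_natCast, Real.rpow_natCast,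
        pow_mul]
      field_simp [Fne]
      ring
    rw [Finset.sum_congr rfl claim, ← Finset.mul_sum, ← qbt hq hq1 (1 - p) (p * q ^ (k+1)) (N - k)]
    -- Step 3 : RHS
    have hsplitP : qPoch (p * q / (p - 1)) q N =
        qPoch (p * q / (p - 1)) q k *
          ∏ j ∈ Finset.range (N - k), (1 - p * q / (p - 1) * q ^ (k + j)) := by
      have h := Finset.prod_range_add (fun j => 1 - p * q / (p - 1) * q ^ j) k (N - k)
      rw [show k + (N - k) = N from by omega] at h
      exact h
    have hprod : (1 - p) ^ (N - k) *
          ∏ j ∈ Finset.range (N - k), (1 - p * q / (p - 1) * q ^ (k + j))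
        = ∏ j ∈ Finset.range (N - k), ((1 - p) + p * q ^ (k + 1) * q ^ j) := by
      rw [show (1 - p) ^ (N - k) = ∏ _j ∈ Finset.range (N - k), (1 - p) from by
        rw [Finset.prod_const, Finset.card_range]]
      rw [← Finset.prod_mul_distrib]
      refine Finset.prod_congr rfl fun j _ => ?_
      rw [pow_add]
      field_simp
      ring
    have hpN : (1 - p) ^ N = (1 - p) ^ k * (1 - p) ^ (N - k) := by
      rw [← pow_add]
      congr 1
      omega
    have hpm : (p - 1) ^ k = (-1 : ℝ) ^ k * (1 - p) ^ k := by
      rw [← mul_pow]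
      congr 1
      ring
    have hqm : (q - 1) ^ k = (-1 : ℝ) ^ k * (1 - q) ^ k := by
      rw [← mul_pow]
      congr 1
      ring
    have hqmerge : q ^ (-((N.choose 2 : ℝ) + 1) / 2) *
          q ^ ((k : ℝ) * ((k : ℝ) - 1) / 2 - (N : ℝ) * (k : ℝ)) *
          q ^ ((((N + 1) * k : ℕ) : ℝ))
        = q ^ ((k : ℝ) * ((k : ℝ) + 1) / 2 - ((N.choose 2 : ℝ) + 1) / 2) := by
      rw [← Real.rpow_add hq, ← Real.rpow_add hq]
      congr 1
      push_cast
      ring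
    rw [← hqmerge, ← hprod, hpN, hsplitP, qPoch_qN hq hq1 hkN, div_pow, mul_pow,
      ← pow_mul, ← Real.rpow_natCast q ((N + 1) * k), hpm, hqm]
    have hm1 : ((-1 : ℝ)) ^ k ≠ 0 := by
      apply pow_ne_zero
      norm_num
    have h1qk : (1 - q) ^ k ≠ 0 := pow_ne_zero _ h1q
    have h1pk : (1 - p) ^ k ≠ 0 := pow_ne_zero _ h1p
    field_simp [hPk, hm1, h1qk, h1pk, Fne]
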